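/- In the Puiseux monoid P = ⟨1/p : p prime⟩, for any two distinct primes p and q, the element 1 ∈ P has factorizations of lengths p and q (namely p copies of 1/p and q copies of 1/q); consequently U_p(P) contains every prime, hence is infinite for each prime p. -/

import Mathlib

/-- A Puiseux monoid: an additive submonoid of ℚ consisting of nonnegative rationals. -/
def PM.Puiseux (P : AddSubmonoid ℚ) : Prop := ∀ x ∈ P, 0 ≤ x

/-- `a` is an atom of `P`. -/
def PM.IsAtom (P : AddSubmonoid ℚ) (a : ℚ) : Prop :=
  a ∈ P ∧ a ≠ 0 ∧ ∀ x ∈ P, ∀ y ∈ P, a = x + y → x = 0 ∨ y = 0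

/-- A factorization of `x` is a multiset of atoms of `P` summing to `x`. -/
def PM.IsFactorization (P : AddSubmonoid ℚ) (x : ℚ) (z : Multiset ℚ) : Prop :=
  (∀ a ∈ z, PM.IsAtom P a) ∧ z.sum = x

/-- The set of lengths of `x`. -/
def PM.Lengths (P : AddSubmonoid ℚ) (x : ℚ) : Set ℕ :=
  {n | ∃ z : Multiset ℚ, PM.IsFactorization P x z ∧ Multiset.card z = n}

/-- `P` is atomic: it is generated by its set of atoms. -/
def PM.Atomic (P : AddSubmonoid ℚ) : Prop :=
  AddSubmonoid.closure {a | PM.IsAtom P a} = P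

/-- The union of sets of lengths `U_k(P)`. -/
def PM.U (P : AddSubmonoid ℚ) (k : ℕ) : Set ℕ :=
  {l | ∃ x ∈ P, k ∈ PM.Lengths P x ∧ l ∈ PM.Lengths P x}


lemma lemA (p : ℕ) (hp : p.Prime) :
    ∀ m : Multiset ℚ, (∀ a ∈ m, ∃ q : ℕ, q.Prime ∧ q ≠ p ∧ a = 1/q) →
    ∃ a b : ℕ, b ≠ 0 ∧ ¬ p ∣ b ∧ m.sum = a / b := by
  intro m
  induction m using Multiset.induction with
  | empty =>
    intro _
    exact ⟨0, 1, one_ne_zero, fun h => hp.ne_one (Nat.dvd_one.mp h), by simp⟩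
  | cons x t ih =>
    intro h
    obtain ⟨q, hq, hqp, rfl⟩ := h x (Multiset.mem_cons_self _ _)
    obtain ⟨a, b, hb, hpb, hsum⟩ := ih (fun a ha => h a (Multiset.mem_cons_of_mem ha))
    refine ⟨b + q * a, q * b, Nat.mul_ne_zero hq.pos.ne' hb, ?_, ?_⟩
    · intro hd
      rcases (Nat.Prime.dvd_mul hp).mp hd with h1 | h2
      · exact hqp ((Nat.prime_dvd_prime_iff_eq hp hq).mp h1).symm
      · exact hpb h2
    · have hq0 : (q:ℚ) ≠ 0 := Nat.cast_ne_zero.mpr hq.pos.ne'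
      have hb0 : (b:ℚ) ≠ 0 := Nat.cast_ne_zero.mpr hb
      rw [Multiset.sum_cons, hsum]
      push_cast
      field_simp

lemma keyL (p : ℕ) (hp : p.Prime) (m : Multiset ℚ)
    (hm : ∀ a ∈ m, ∃ q : ℕ, q.Prime ∧ a = 1/q) (hs : m.sum = 1/p) :
    Multiset.card m = 1 := by
  by_cases hmem : (1/(p:ℚ)) ∈ m
  · obtain ⟨t, rfl⟩ := Multiset.exists_cons_of_mem hmem
    have ht : t.sum = 0 := by
      rw [Multiset.sum_cons] at hs; linarith
    have hnonneg : ∀ x ∈ t, (0:ℚ) ≤ x := by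
      intro x hx
      obtain ⟨q, hq, rfl⟩ := hm x (Multiset.mem_cons_of_mem hx)
      positivity
    have ht0 : t = 0 := by
      by_contra h
      obtain ⟨a, ha⟩ := Multiset.exists_mem_of_ne_zero h
      obtain ⟨q, hq, haq⟩ := hm a (Multiset.mem_cons_of_mem ha)
      have h1 : (0:ℚ) < a := by
        rw [haq]
        have : (0:ℚ) < q := Nat.cast_pos.mpr hq.pos
        positivity
      have h2 := Multiset.single_le_sum hnonneg _ ha
      linarith
    simp [ht0]
  · exfalso
    have hall : ∀ a ∈ m, ∃ q : ℕ, q.Prime ∧ q ≠ p ∧ a = 1/q := by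
      intro a ha
      obtain ⟨q, hq, rfl⟩ := hm a ha
      refine ⟨q, hq, fun h => hmem ?_, rfl⟩
      rwa [← h]
    obtain ⟨a, b, hb, hpb, hsum⟩ := lemA p hp m hall
    rw [hs] at hsum
    have hp0 : (p:ℚ) ≠ 0 := Nat.cast_pos.mpr hp.pos |>.ne'
    have hb0 : (b:ℚ) ≠ 0 := Nat.cast_ne_zero.mpr hb
    field_simp at hsum
    exact hpb ⟨a, by exact_mod_cast hsum⟩

lemma atomL (p : ℕ) (hp : p.Prime) :
    PM.IsAtom (AddSubmonoid.closure {q : ℚ | ∃ p : ℕ, p.Prime ∧ q = 1 / p}) (1/p) := by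
  refine ⟨AddSubmonoid.subset_closure ⟨p, hp, rfl⟩, ?_, ?_⟩
  · have : (0:ℚ) < p := Nat.cast_pos.mpr hp.pos
    positivity
  · intro x hx y hy hxy
    obtain ⟨m₁, hm₁, hs₁⟩ := AddSubmonoid.exists_multiset_of_mem_closure hx
    obtain ⟨m₂, hm₂, hs₂⟩ := AddSubmonoid.exists_multiset_of_mem_closure hy
    have hcard : Multiset.card m₁ + Multiset.card m₂ = 1 := by
      rw [← Multiset.card_add]
      refine keyL p hp (m₁ + m₂) ?_ ?_
      · intro a ha
        rcases Multiset.mem_add.mp ha with h | h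
        · exact hm₁ a h
        · exact hm₂ a h
      · rw [Multiset.sum_add, hs₁, hs₂, hxy]
    rcases Nat.add_eq_one_iff.mp hcard with ⟨h1, _⟩ | ⟨_, h2⟩
    · left; rw [← hs₁, Multiset.card_eq_zero.mp h1, Multiset.sum_zero]
    · right; rw [← hs₂, Multiset.card_eq_zero.mp h2, Multiset.sum_zero]

theorem stmt8 :
    let P := AddSubmonoid.closure {q : ℚ | ∃ p : ℕ, p.Prime ∧ q = 1 / p}
    (∀ p : ℕ, p.Prime →
      PM.IsFactorization P 1 (Multiset.replicate p (1 / (p : ℚ))) ∧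
      p ∈ PM.Lengths P 1) ∧
    ∀ p : ℕ, p.Prime →
      (∀ r : ℕ, r.Prime → r ∈ PM.U P p) ∧ (PM.U P p).Infinite := by
  intro P
  have hfac : ∀ p : ℕ, p.Prime →
      PM.IsFactorization P 1 (Multiset.replicate p (1/(p:ℚ))) := by
    intro p hp
    constructor
    · intro a ha
      rw [Multiset.eq_of_mem_replicate ha]
      exact atomL p hp
    · rw [Multiset.sum_replicate, nsmul_eq_mul]
      have hp0 : (p:ℚ) ≠ 0 := Nat.cast_ne_zero.mpr hp.pos.ne'
      field_simp
  have hlen : ∀ p : ℕ, p.Prime → p ∈ PM.Lengths P 1 := fun p hp =>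
    ⟨_, hfac p hp, Multiset.card_replicate _ _⟩
  have h1P : (1:ℚ) ∈ P := by
    have h : (1/2 : ℚ) ∈ P := AddSubmonoid.subset_closure ⟨2, Nat.prime_two, by norm_num⟩
    have he : (1:ℚ) = 1/2 + 1/2 := by norm_num
    rw [he]; exact add_mem h h
  refine ⟨fun p hp => ⟨hfac p hp, hlen p hp⟩, fun p hp => ?_⟩
  have hU : ∀ r : ℕ, r.Prime → r ∈ PM.U P p :=
    fun r hr => ⟨1, h1P, hlen p hp, hlen r hr⟩
  exact ⟨hU, Nat.infinite_setOf_prime.mono (fun r hr => hU r hr)⟩
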